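/- arXiv:2212.10850 — 2 statements merged into one kernel-verified Lean document; each statement's English description precedes it below -/
import Mathlib

section
/- For every simple connected graph G, σ(G) ≤ f_svcp(G) ≤ γ(G), where σ(G) is the covering cover pebbling number and γ(G) the cover pebbling number. -/
open Finset

/-- `S` is a vertex cover of `G`: every edge has at least one endpoint in `S`. -/
def IsVC {V : Type*} (G : SimpleGraph V) (S : Set V) : Prop :=
  ∀ ⦃u v : V⦄, G.Adj u v → u ∈ S ∨ v ∈ S

/-- `S` is a secure vertex cover of `G`. -/
def IsSecureVC {V : Type*} (G : SimpleGraph V) (S : Set V) : Prop :=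
  IsVC G S ∧ ∀ u : V, ∃ v ∈ S, G.Adj u v ∧ IsVC G ((S \ {v}) ∪ {u})

/-- One pebbling move: remove two pebbles from `u`, add one pebble on a neighbor `v`. -/
def PebbleMove {V : Type*} [DecidableEq V] (G : SimpleGraph V) (C C' : V → ℕ) : Prop :=
  ∃ u v : V, G.Adj u v ∧ 2 ≤ C u ∧
    C' = Function.update (Function.update C u (C u - 2)) v (C v + 1)

/-- A distribution `C` can reach the set `S`: some sequence of pebbling moves
places at least one pebble on every vertex of `S`. -/
def Reaches {V : Type*} [DecidableEq V] (G : SimpleGraph V) (C : V → ℕ) (S : Set V) : Prop :=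
  ∃ C' : V → ℕ, Relation.ReflTransGen (PebbleMove G) C C' ∧ ∀ v ∈ S, 1 ≤ C' v

/-- The secure vertex cover pebbling number of `G`. -/
noncomputable def fsvcp {V : Type*} [Fintype V] [DecidableEq V] (G : SimpleGraph V) : ℕ :=
  sInf {m : ℕ | ∀ C : V → ℕ, (∑ v, C v) = m →
    ∃ S : Set V, IsSecureVC G S ∧ Reaches G C S}

/-- The cover pebbling number of `G`. -/
noncomputable def coverPeb {V : Type*} [Fintype V] [DecidableEq V] (G : SimpleGraph V) : ℕ :=
  sInf {m : ℕ | ∀ C : V → ℕ, (∑ v, C v) = m → Reaches G C Set.univ}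

/-- The covering cover pebbling number of `G`. -/
noncomputable def covCoverPeb {V : Type*} [Fintype V] [DecidableEq V] (G : SimpleGraph V) : ℕ :=
  sInf {m : ℕ | ∀ C : V → ℕ, (∑ v, C v) = m →
    ∃ S : Set V, IsVC G S ∧ Reaches G C S}

/-- The secure vertex cover number of `G`. -/
noncomputable def secVCNum {V : Type*} [Fintype V] (G : SimpleGraph V) : ℕ :=
  sInf {k : ℕ | ∃ S : Set V, IsSecureVC G S ∧ S.ncard = k}

/-- The join `G + H` of two graphs. -/
def graphJoin {V W : Type*} (G : SimpleGraph V) (H : SimpleGraph W) :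
    SimpleGraph (V ⊕ W) where
  Adj x y :=
    match x, y with
    | Sum.inl a, Sum.inl b => G.Adj a b
    | Sum.inr a, Sum.inr b => H.Adj a b
    | Sum.inl _, Sum.inr _ => True
    | Sum.inr _, Sum.inl _ => True
  symm := by
    constructor
    rintro (a | a) (b | b) h
    · exact G.adj_symm h
    · trivial
    · trivial
    · exact H.adj_symm h
  loopless := by
    constructor
    rintro (a | a) h
    · exact G.irrefl h
    · exact H.irrefl h
/-- The graph `G*`: a copy of `G`, a clique on a second copy `V'` of the vertex set,
and a perfect matching joining each vertex to its copy. -/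
def Gstar {V : Type*} (G : SimpleGraph V) : SimpleGraph (V ⊕ V) where
  Adj x y :=
    match x, y with
    | Sum.inl a, Sum.inl b => G.Adj a b
    | Sum.inr a, Sum.inr b => a ≠ b
    | Sum.inl a, Sum.inr b => a = b
    | Sum.inr a, Sum.inl b => a = b
  symm := by
    constructor
    rintro (a | a) (b | b) h
    · exact G.adj_symm h
    · exact h.symm
    · exact h.symm
    · exact h.symm
  loopless := by
    constructor
    rintro (a | a) h
    · exact G.irrefl h
    · exact h rfl

/-- The friendship graph `F n`: `n` triangles sharing a common apex vertex `none`. -/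
def friendshipGraph (n : ℕ) : SimpleGraph (Option (Fin n × Fin 2)) where
  Adj x y :=
    match x, y with
    | none, none => False
    | none, some _ => True
    | some _, none => True
    | some a, some b => a.1 = b.1 ∧ a.2 ≠ b.2
  symm := by
    constructor
    rintro (_ | a) (_ | b) h
    · exact h.elim
    · trivial
    · trivial
    · exact ⟨h.1.symm, h.2.symm⟩
  loopless := by
    constructor
    rintro (_ | a) h
    · exact h
    · exact h.2 rfl

/-- The wheel graph `W n`: the join of a single vertex (the hub) with the cycle `C n`. -/
def wheelGraph (n : ℕ) : SimpleGraph (Fin 1 ⊕ Fin n) :=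
  graphJoin (⊥ : SimpleGraph (Fin 1)) (SimpleGraph.cycleGraph n)

/-- Membership predicate (in terms of the 1-based index `j`) for the canonical
secure vertex cover `S_n` of the path `P_n`: `v_{n-1}, v_{n-2}, v_{n-4} ∈ S_n`,
membership is 5-periodic (`v_k ∈ S_n ↔ v_{k+5} ∈ S_n` for `2 ≤ k ≤ n-5`), and
`v_1 ∈ S_n` iff `n ≢ 4 (mod 5)`. -/
def inSpath (n j : ℕ) : Prop :=
  (2 ≤ j ∧ j ≤ n ∧ ((n - j) % 5 = 1 ∨ (n - j) % 5 = 2 ∨ (n - j) % 5 = 4)) ∨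
    (j = 1 ∧ 2 ≤ n ∧ n % 5 ≠ 4)

instance (n j : ℕ) : Decidable (inSpath n j) := by unfold inSpath; infer_instance

/-- The canonical secure vertex cover `S_n` of the path `P_n` (vertex `v_j`
corresponds to `(j-1 : Fin n)`). -/
def SpathFinset (n : ℕ) : Finset (Fin n) :=
  Finset.univ.filter (fun i => inSpath n (i.1 + 1))

/-- The weight of a set of vertices of `P_n`: `w(S) = ∑_{v_j ∈ S} 2^(j-1)`. -/
def pathWeight {n : ℕ} (S : Finset (Fin n)) : ℕ := ∑ i ∈ S, 2 ^ (i : ℕ)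

/-- `w_n`: the minimum weight of a secure vertex cover of the path `P_n`. -/
noncomputable def wmin (n : ℕ) : ℕ :=
  sInf {m : ℕ | ∃ S : Finset (Fin n),
    IsSecureVC (SimpleGraph.pathGraph n) ↑S ∧ pathWeight S = m}

lemma moveMany {V : Type*} [DecidableEq V] (G : SimpleGraph V) {u v : V} (h : G.Adj u v) :
    ∀ (k : ℕ) (C : V → ℕ), 2 * k ≤ C u →
      Relation.ReflTransGen (PebbleMove G)
        C (Function.update (Function.update C u (C u - 2 * k)) v (C v + k)) := by
  have hne : u ≠ v := h.ne
  intro k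
  induction k with
  | zero =>
    intro C _
    have : Function.update (Function.update C u (C u - 2 * 0)) v (C v + 0) = C := by
      funext w
      by_cases hw : w = v
      · subst hw; simp [Function.update_apply, hne.symm]
      · by_cases hw' : w = u <;> simp [Function.update_apply, hw, hw', hne]
    rw [this]
  | succ k ih =>
    intro C hC
    set C1 := Function.update (Function.update C u (C u - 2)) v (C v + 1) with hC1
    have hmove : PebbleMove G C C1 := ⟨u, v, h, le_trans (by omega) hC, rfl⟩
    have hC1u : C1 u = C u - 2 := by simp [hC1, Function.update_apply, hne]
    have hC1v : C1 v = C v + 1 := by simp [hC1, Function.update_apply]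
    have hk : 2 * k ≤ C1 u := by omega
    have htail := ih C1 hk
    have heq : Function.update (Function.update C1 u (C1 u - 2 * k)) v (C1 v + k)
        = Function.update (Function.update C u (C u - 2 * (k+1))) v (C v + (k+1)) := by
      funext w
      by_cases hw : w = v
      · subst hw; simp [Function.update_apply]; omega
      · by_cases hw' : w = u
        · subst hw'; simp [Function.update_apply, hw, hC1u, hne]; omega
        · simp [hC1, Function.update_apply, hw, hw']
    rw [heq] at htail
    exact Relation.ReflTransGen.head hmove htail

lemma transfer {V : Type*} [DecidableEq V] (G : SimpleGraph V) {a t : V}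
    (p : G.Walk a t) : ∀ (C : V → ℕ), 2 ^ p.length ≤ C a →
      ∃ C', Relation.ReflTransGen (PebbleMove G) C C' ∧ 1 ≤ C' t ∧
        (∀ x, x ≠ a → C x ≤ C' x) ∧ C a - 2 ^ p.length ≤ C' a := by
  induction p with
  | nil =>
    intro C h
    exact ⟨C, .refl, le_trans (by norm_num) h, fun _ _ => le_rfl, Nat.sub_le _ _⟩
  | @cons a b t hab q ih =>
    intro C hC
    have hne : a ≠ b := hab.ne
    have hlen : (SimpleGraph.Walk.cons hab q).length = q.length + 1 := rfl
    rw [hlen] at hC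
    have hpow : 2 ^ (q.length + 1) = 2 * 2 ^ q.length := by rw [pow_succ]; ring
    have h2k : 2 * 2 ^ q.length ≤ C a := by rw [← hpow]; exact hC
    set C1 := Function.update (Function.update C a (C a - 2 * 2 ^ q.length)) b
        (C b + 2 ^ q.length) with hC1def
    have hmoves := moveMany G hab (2 ^ q.length) C h2k
    have hC1b : C1 b = C b + 2 ^ q.length := by simp [hC1def, Function.update_apply]
    have hC1a : C1 a = C a - 2 * 2 ^ q.length := by
      simp [hC1def, Function.update_apply, hne]
    have hC1x : ∀ x, x ≠ a → x ≠ b → C1 x = C x := by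
      intro x hxa hxb; simp [hC1def, Function.update_apply, hxa, hxb]
    have hkle : 2 ^ q.length ≤ C1 b := by rw [hC1b]; exact Nat.le_add_left _ _
    obtain ⟨C', hrtg, ht, hmono, hvb⟩ := ih C1 hkle
    refine ⟨C', hmoves.trans hrtg, ht, ?_, ?_⟩
    · intro x hxa
      by_cases hxb : x = b
      · subst hxb
        have h1 : C1 x - 2 ^ q.length ≤ C' x := hvb
        rw [hC1b] at h1; omega
      · rw [← hC1x x hxa hxb]; exact hmono x hxb
    · have h1 : C1 a ≤ C' a := hmono a hne
      rw [hC1a] at h1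
      rw [hlen, hpow]
      exact h1

lemma coverAux {V : Type*} [Fintype V] [DecidableEq V] (G : SimpleGraph V)
    (hG : G.Preconnected) (u : V) :
    ∀ (s : Finset V) (C : V → ℕ), s.card * 2 ^ Fintype.card V ≤ C u →
      ∃ C', Relation.ReflTransGen (PebbleMove G) C C' ∧
        (∀ w ∈ s, w ≠ u → 1 ≤ C' w) ∧
        (∀ w, w ≠ u → C w ≤ C' w) ∧ C u - s.card * 2 ^ Fintype.card V ≤ C' u := by
  intro s
  induction s using Finset.induction_on with
  | empty =>
    intro C _
    exact ⟨C, .refl, by simp, fun _ _ => le_rfl, by simp⟩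
  | @insert t s' hts ih =>
    intro C hC
    have hcard : (insert t s').card = s'.card + 1 := Finset.card_insert_of_notMem hts
    rw [hcard] at hC
    set L := Fintype.card V with hL
    have hmul : s'.card * 2 ^ L ≤ (s'.card + 1) * 2 ^ L :=
      Nat.mul_le_mul_right _ (Nat.le_succ _)
    have hone : 2 ^ L ≤ (s'.card + 1) * 2 ^ L := by
      calc 2 ^ L = 1 * 2 ^ L := (one_mul _).symm
        _ ≤ (s'.card + 1) * 2 ^ L := Nat.mul_le_mul_right _ (by omega)
    by_cases htu : t = u
    · obtain ⟨C', hrtg, hcov, hmono, hub⟩ := ih C (le_trans hmul hC)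
      refine ⟨C', hrtg, ?_, hmono, ?_⟩
      · intro w hw hwu
        rcases Finset.mem_insert.mp hw with rfl | hw'
        · exact absurd htu hwu
        · exact hcov w hw' hwu
      · rw [hcard]
        exact le_trans (Nat.sub_le_sub_left hmul _) hub
    · obtain ⟨w⟩ := hG u t
      set p := w.toPath with hp
      have hplen : p.1.length < L := SimpleGraph.Walk.IsPath.length_lt p.2
      have hpow : 2 ^ p.1.length ≤ 2 ^ L := Nat.pow_le_pow_right (by norm_num) hplen.le
      have hCu : 2 ^ p.1.length ≤ C u := le_trans hpow (le_trans hone hC)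
      obtain ⟨C1, hrtg1, ht1, hmono1, hub1⟩ := transfer G p.1 C hCu
      have hsum : s'.card * 2 ^ L + 2 ^ L = (s'.card + 1) * 2 ^ L := by ring
      have hC1u : s'.card * 2 ^ L ≤ C1 u := by
        have h1 : s'.card * 2 ^ L ≤ C u - 2 ^ L :=
          Nat.le_sub_of_add_le (hsum ▸ hC)
        have h2 : C u - 2 ^ L ≤ C u - 2 ^ p.1.length := Nat.sub_le_sub_left hpow _
        exact le_trans h1 (le_trans h2 hub1)
      obtain ⟨C', hrtg2, hcov, hmono2, hub2⟩ := ih C1 hC1u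
      refine ⟨C', hrtg1.trans hrtg2, ?_, ?_, ?_⟩
      · intro x hx hxu
        rcases Finset.mem_insert.mp hx with rfl | hx'
        · exact le_trans ht1 (hmono2 x hxu)
        · exact hcov x hx' hxu
      · intro x hxu
        exact le_trans (hmono1 x hxu) (hmono2 x hxu)
      · rw [hcard]
        have e1 : C u - 2 ^ L ≤ C1 u :=
          le_trans (Nat.sub_le_sub_left hpow _) hub1
        have e2 : (C u - 2 ^ L) - s'.card * 2 ^ L ≤ C1 u - s'.card * 2 ^ L :=
          Nat.sub_le_sub_right e1 _
        have e3 := le_trans e2 hub2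
        rw [Nat.sub_sub] at e3
        have e4 : (s'.card + 1) * 2 ^ L = 2 ^ L + s'.card * 2 ^ L := by ring
        rw [e4]
        exact e3

theorem stmt1 {V : Type*} [Fintype V] [DecidableEq V] (G : SimpleGraph V)
    (hG : G.Connected) :
    covCoverPeb G ≤ fsvcp G ∧ fsvcp G ≤ coverPeb G := by
  classical
  have hne : Nonempty V := hG.nonempty
  by_cases hE : ∃ a b : V, G.Adj a b
  · obtain ⟨a, b, hab⟩ := hE
    -- every vertex has a neighbor
    have hnb : ∀ u : V, ∃ v : V, G.Adj u v := by
      intro u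
      obtain ⟨w⟩ := hG.preconnected u a
      cases w with
      | nil => exact ⟨b, hab⟩
      | cons h _ => exact ⟨_, h⟩
    -- univ is a secure vertex cover
    have hsec : IsSecureVC G Set.univ := by
      constructor
      · intro u v _; exact Or.inl (Set.mem_univ u)
      · intro u
        obtain ⟨v, hv⟩ := hnb u
        refine ⟨v, Set.mem_univ v, hv, ?_⟩
        intro x y hxy
        by_cases hx : x = v
        · right
          have hy : y ≠ v := fun h => hxy.ne (hx.trans h.symm)
          exact Or.inl ⟨Set.mem_univ y, hy⟩
        · left; exact Or.inl ⟨Set.mem_univ x, hx⟩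
    set n := Fintype.card V with hn
    have hnpos : 0 < n := Fintype.card_pos
    set M := n * (n * 2 ^ n + 1) with hM
    -- M belongs to the cover-pebbling set
    have hMcov : ∀ C : V → ℕ, (∑ v, C v) = M → Reaches G C Set.univ := by
      intro C hsum
      have hu : ∃ u : V, n * 2 ^ n + 1 ≤ C u := by
        by_contra hcon
        push_neg at hcon
        have hble : ∀ u ∈ Finset.univ, C u ≤ n * 2 ^ n := fun u _ => by
          have := hcon u; omega
        have := Finset.sum_le_card_nsmul Finset.univ C (n * 2 ^ n) hble
        simp only [Finset.card_univ, smul_eq_mul, ← hn] at this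
        rw [hsum, hM] at this
        nlinarith
      obtain ⟨u, hu⟩ := hu
      have hCu : (Finset.univ : Finset V).card * 2 ^ Fintype.card V ≤ C u := by
        rw [Finset.card_univ, ← hn]; omega
      obtain ⟨C', hrtg, hcov, _, hub⟩ := coverAux G hG.preconnected u Finset.univ C hCu
      refine ⟨C', hrtg, ?_⟩
      intro v _
      by_cases hvu : v = u
      · subst hvu
        rw [Finset.card_univ, ← hn] at hub
        omega
      · exact hcov v (Finset.mem_univ v) hvu
    -- M is in all three sets
    have hM1 : M ∈ {m : ℕ | ∀ C : V → ℕ, (∑ v, C v) = m → Reaches G C Set.univ} := hMcov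
    have hsub1 : {m : ℕ | ∀ C : V → ℕ, (∑ v, C v) = m → Reaches G C Set.univ} ⊆
        {m : ℕ | ∀ C : V → ℕ, (∑ v, C v) = m →
          ∃ S : Set V, IsSecureVC G S ∧ Reaches G C S} := by
      intro m hm C hC
      exact ⟨Set.univ, hsec, hm C hC⟩
    have hsub2 : {m : ℕ | ∀ C : V → ℕ, (∑ v, C v) = m →
          ∃ S : Set V, IsSecureVC G S ∧ Reaches G C S} ⊆
        {m : ℕ | ∀ C : V → ℕ, (∑ v, C v) = m →
          ∃ S : Set V, IsVC G S ∧ Reaches G C S} := by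
      intro m hm C hC
      obtain ⟨S, hS, hr⟩ := hm C hC
      exact ⟨S, hS.1, hr⟩
    constructor
    · -- covCoverPeb ≤ fsvcp
      have hne2 : {m : ℕ | ∀ C : V → ℕ, (∑ v, C v) = m →
          ∃ S : Set V, IsSecureVC G S ∧ Reaches G C S}.Nonempty := ⟨M, hsub1 hM1⟩
      have := Nat.sInf_mem hne2
      exact Nat.sInf_le (hsub2 this)
    · have hne1 : {m : ℕ | ∀ C : V → ℕ, (∑ v, C v) = m →
          Reaches G C Set.univ}.Nonempty := ⟨M, hM1⟩
      have := Nat.sInf_mem hne1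
      exact Nat.sInf_le (hsub1 this)
  · -- no edges: V is a single vertex
    push_neg at hE
    obtain ⟨x⟩ := hne
    have hsub : ∀ y z : V, y = z := by
      intro y z
      obtain ⟨w⟩ := hG.preconnected y z
      cases w with
      | nil => rfl
      | cons h _ => exact absurd h (hE _ _)
    have hcard : Fintype.card V = 1 :=
      Fintype.card_eq_one_iff.mpr ⟨x, fun y => hsub y x⟩
    have hempty : {m : ℕ | ∀ C : V → ℕ, (∑ v, C v) = m →
        ∃ S : Set V, IsSecureVC G S ∧ Reaches G C S} = ∅ := by
      ext m
      simp only [Set.mem_setOf_eq, Set.mem_empty_iff_false, iff_false]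
      intro hm
      have hsum : (∑ _v : V, m) = m := by
        rw [Finset.sum_const, Finset.card_univ, hcard, one_smul]
      obtain ⟨S, hS, _⟩ := hm (fun _ => m) hsum
      obtain ⟨v, _, hadj, _⟩ := hS.2 x
      exact hE x v hadj
    have hf0 : fsvcp G = 0 := by
      rw [fsvcp, hempty, Nat.sInf_empty]
    constructor
    · rw [hf0]
      have h0 : 0 ∈ {m : ℕ | ∀ C : V → ℕ, (∑ v, C v) = m →
          ∃ S : Set V, IsVC G S ∧ Reaches G C S} := by
        intro C _
        refine ⟨∅, fun u v h => absurd h (hE u v), C, .refl, ?_⟩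
        intro v hv
        exact absurd hv (Set.notMem_empty v)
      exact Nat.sInf_le h0
    · rw [hf0]; exact Nat.zero_le _
end

section
/- Let P_n be the path with vertices v_1, ..., v_n, let w(S) = Σ_{v_j ∈ S} 2^{j-1} for S ⊆ V(P_n), and let S_n be the canonical secure vertex cover (defined by: v_{n-1} ∈ S_n for n ≥ 2; v_{n-2} ∈ S_n for n ≥ 3; v_{n-4} ∈ S_n for n ≥ 5; for n ≥ 6, v_k ∈ S_n iff v_{k+5} ∈ S_n for 2 ≤ k ≤ n-5, and v_1 ∈ S_n iff n ≢ 4 mod 5). Then for every n ≥ 2 and every secure vertex cover S of P_n, w(S) ≥ w(S_n), with equality if and only if S = S_n. -/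
open Finset

open scoped symmDiff

lemma mem_SpathFinset_iff {n : ℕ} (i : Fin n) :
    i ∈ SpathFinset n ↔ inSpath n (i.1 + 1) := by
  simp [SpathFinset]

lemma two_pow_sum (k : ℕ) : (∑ i ∈ Finset.range k, 2 ^ i) + 1 = 2 ^ k := by
  induction k with
  | zero => simp
  | succ k ih => rw [Finset.sum_range_succ, pow_succ]; omega

lemma fin_mk_ne {n a b : ℕ} (ha : a < n) (hb : b < n) (hab : a ≠ b) :
    (⟨a, ha⟩ : Fin n) ≠ ⟨b, hb⟩ := fun h => hab (congrArg Fin.val h)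

lemma key {n : ℕ} (S : Finset (Fin n))
    (hS : IsSecureVC (SimpleGraph.pathGraph n) ↑S) (k : Fin n)
    (agree : ∀ j : Fin n, k < j → (j ∈ S ↔ j ∈ SpathFinset n))
    (hk : k ∈ SpathFinset n) : k ∈ S := by
  have edge : ∀ (i : ℕ) (h : i + 1 < n),
      (⟨i, by omega⟩ : Fin n) ∈ S ∨ (⟨i + 1, h⟩ : Fin n) ∈ S := by
    intro i h
    have := hS.1 (u := ⟨i, by omega⟩) (v := ⟨i + 1, h⟩)
      (by rw [SimpleGraph.pathGraph_adj]; left; rfl)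
    simpa using this
  set K := k.1 with hKd
  have hKn : K < n := k.isLt
  rw [mem_SpathFinset_iff] at hk
  unfold inSpath at hk
  have hr : (n - 1 - K) % 5 = 1 ∨ (n - 1 - K) % 5 = 2 ∨ (n - 1 - K) % 5 = 4 ∨
      (K = 0 ∧ (n - 1 - K) % 5 = 0 ∧ 2 ≤ n) := by omega
  have hnotin : ∀ (j : ℕ) (hj : j < n), K < j → ¬ inSpath n (j + 1) →
      (⟨j, hj⟩ : Fin n) ∉ S := by
    intro j hj hKj hns hmem
    rw [agree ⟨j, hj⟩ (by simpa [Fin.lt_def] using hKj), mem_SpathFinset_iff] at hmem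
    exact hns hmem
  have hkeq : (⟨K, hKn⟩ : Fin n) = k := rfl
  rcases hr with h1 | h2 | h4 | ⟨hK0, h0, hn2⟩
  · -- residue 1
    have hK1 : K + 1 < n := by omega
    rcases edge K hK1 with h | h
    · rwa [hkeq] at h
    · exact absurd h (hnotin (K + 1) hK1 (by omega) (by unfold inSpath; omega))
  · -- residue 2
    have hK2 : K + 2 < n := by omega
    obtain ⟨v, hvS, hadj, hswap⟩ := hS.2 ⟨K + 2, hK2⟩
    rw [SimpleGraph.pathGraph_adj] at hadj
    have huval : ((⟨K + 2, hK2⟩ : Fin n) : ℕ) = K + 2 := rfl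
    rw [huval] at hadj
    rcases hadj with hv | hv
    · -- v = K + 3
      have hv3 : v.1 = K + 3 := by omega
      have hvlt : K + 3 < n := by rw [← hv3]; exact v.isLt
      have hbig : 7 ≤ n - 1 - K := by omega
      have hK4 : K + 4 < n := by omega
      have hadj34 : (SimpleGraph.pathGraph n).Adj ⟨K + 3, by omega⟩ ⟨K + 4, hK4⟩ := by
        rw [SimpleGraph.pathGraph_adj]; left; rfl
      rcases hswap hadj34 with h | h
      · simp only [Set.mem_union, Set.mem_diff, Set.mem_singleton_iff,
          Finset.mem_coe] at h
        rcases h with ⟨_, hne⟩ | heq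
        · exact absurd (Fin.ext hv3.symm) hne
        · exact absurd heq (fin_mk_ne _ _ (by omega))
      · simp only [Set.mem_union, Set.mem_diff, Set.mem_singleton_iff,
          Finset.mem_coe] at h
        rcases h with ⟨hmem, _⟩ | heq
        · exact absurd hmem (hnotin (K + 4) hK4 (by omega) (by unfold inSpath; omega))
        · exact absurd heq (fin_mk_ne _ _ (by omega))
    · -- v = K + 1
      have hv1 : v.1 = K + 1 := by omega
      have hadj01 : (SimpleGraph.pathGraph n).Adj ⟨K, by omega⟩ ⟨K + 1, by omega⟩ := by
        rw [SimpleGraph.pathGraph_adj]; left; rfl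
      rcases hswap hadj01 with h | h
      · simp only [Set.mem_union, Set.mem_diff, Set.mem_singleton_iff,
          Finset.mem_coe] at h
        rcases h with ⟨hmem, _⟩ | heq
        · rwa [hkeq] at hmem
        · exact absurd heq (fin_mk_ne _ _ (by omega))
      · simp only [Set.mem_union, Set.mem_diff, Set.mem_singleton_iff,
          Finset.mem_coe] at h
        rcases h with ⟨_, hne⟩ | heq
        · exact absurd (Fin.ext hv1.symm) hne
        · exact absurd heq (fin_mk_ne _ _ (by omega))
  · -- residue 4
    have hK1 : K + 1 < n := by omega
    rcases edge K hK1 with h | h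
    · rwa [hkeq] at h
    · exact absurd h (hnotin (K + 1) hK1 (by omega) (by unfold inSpath; omega))
  · -- K = 0, residue 0
    exfalso
    have hn6 : 6 ≤ n := by omega
    have h0n : (0 : ℕ) < n := by omega
    obtain ⟨v, hvS, hadj, hswap⟩ := hS.2 ⟨0, h0n⟩
    rw [SimpleGraph.pathGraph_adj] at hadj
    have huval : ((⟨0, h0n⟩ : Fin n) : ℕ) = 0 := rfl
    rw [huval] at hadj
    have hv1 : v.1 = 1 := by omega
    have hadj12 : (SimpleGraph.pathGraph n).Adj ⟨1, by omega⟩ ⟨2, by omega⟩ := by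
      rw [SimpleGraph.pathGraph_adj]; left; rfl
    rcases hswap hadj12 with h | h
    · simp only [Set.mem_union, Set.mem_diff, Set.mem_singleton_iff,
        Finset.mem_coe] at h
      rcases h with ⟨_, hne⟩ | heq
      · exact absurd (Fin.ext hv1.symm) hne
      · exact absurd heq (fin_mk_ne _ _ (by omega))
    · simp only [Set.mem_union, Set.mem_diff, Set.mem_singleton_iff,
        Finset.mem_coe] at h
      rcases h with ⟨hmem, _⟩ | heq
      · exact absurd hmem (hnotin 2 (by omega) (by omega) (by unfold inSpath; omega))
      · exact absurd heq (fin_mk_ne _ _ (by omega))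

lemma dominance {n : ℕ} (A B : Finset (Fin n))
    (h : ∀ k : Fin n, (∀ j : Fin n, k < j → (j ∈ A ↔ j ∈ B)) → k ∈ B → k ∈ A) :
    pathWeight B ≤ pathWeight A ∧ (pathWeight A = pathWeight B ↔ A = B) := by
  by_cases hAB : A = B
  · subst hAB; simp
  · suffices hlt : pathWeight B < pathWeight A by
      refine ⟨hlt.le, ⟨fun he => absurd he (by omega), fun he => absurd he hAB⟩⟩
    have hne : (symmDiff A B).Nonempty := by
      rw [Finset.nonempty_iff_ne_empty]
      intro hemp
      exact hAB (symmDiff_eq_bot.mp hemp)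
    set m := (symmDiff A B).max' hne with hm
    have agree : ∀ j : Fin n, m < j → (j ∈ A ↔ j ∈ B) := by
      intro j hj
      by_contra hc
      have hjm : j ∈ symmDiff A B := by
        rw [Finset.mem_symmDiff]; tauto
      exact absurd (Finset.le_max' _ j hjm) (not_le.mpr hj)
    have hmd := Finset.max'_mem _ hne
    rw [Finset.mem_symmDiff] at hmd
    have hmA : m ∈ A ∧ m ∉ B := by
      rcases hmd with h' | ⟨hB, hA⟩
      · exact h'
      · exact absurd (h m agree hB) hA
    have hsplit : ∀ C : Finset (Fin n), pathWeight C =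
        (∑ i ∈ C.filter (fun j => m < j), 2 ^ (i : ℕ)) +
        ∑ i ∈ C.filter (fun j => ¬ m < j), 2 ^ (i : ℕ) :=
      fun C => (Finset.sum_filter_add_sum_filter_not C _ _).symm
    have hfeq : A.filter (fun j => m < j) = B.filter (fun j => m < j) := by
      apply Finset.ext
      intro j
      simp only [Finset.mem_filter]
      exact ⟨fun ⟨h1, h2⟩ => ⟨(agree j h2).mp h1, h2⟩,
        fun ⟨h1, h2⟩ => ⟨(agree j h2).mpr h1, h2⟩⟩
    have hA2 : 2 ^ (m : ℕ) ≤ ∑ i ∈ A.filter (fun j => ¬ m < j), 2 ^ (i : ℕ) :=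
      Finset.single_le_sum (f := fun i : Fin n => 2 ^ (i : ℕ)) (fun i _ => Nat.zero_le _)
        (Finset.mem_filter.mpr ⟨hmA.1, lt_irrefl m⟩)
    have hB2 : (∑ i ∈ B.filter (fun j => ¬ m < j), 2 ^ (i : ℕ)) < 2 ^ (m : ℕ) := by
      have himg : ∑ i ∈ B.filter (fun j => ¬ m < j), 2 ^ (i : ℕ) =
          ∑ t ∈ (B.filter (fun j => ¬ m < j)).image Fin.val, 2 ^ t :=
        (Finset.sum_image (fun x _ y _ hxy => Fin.ext hxy)).symm
      rw [himg]
      have hsub : (B.filter (fun j => ¬ m < j)).image Fin.val ⊆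
          Finset.range (m : ℕ) := by
        intro t ht
        rw [Finset.mem_image] at ht
        obtain ⟨i, hi, rfl⟩ := ht
        rw [Finset.mem_filter] at hi
        rw [Finset.mem_range]
        have : i ≠ m := fun hh => hmA.2 (hh ▸ hi.1)
        have := hi.2
        rw [Fin.lt_def] at this
        rcases Nat.lt_or_ge (i : ℕ) (m : ℕ) with h' | h'
        · exact h'
        · exact absurd (Fin.ext (le_antisymm (by omega) (by omega))) ‹i ≠ m›
      calc (∑ t ∈ (B.filter (fun j => ¬ m < j)).image Fin.val, 2 ^ t)
          ≤ ∑ t ∈ Finset.range (m : ℕ), 2 ^ t :=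
            Finset.sum_le_sum_of_subset hsub
        _ < 2 ^ (m : ℕ) := by have := two_pow_sum (m : ℕ); omega
    rw [hsplit A, hsplit B, hfeq]
    omega

theorem stmt10 (n : ℕ) (hn : 2 ≤ n) (S : Finset (Fin n))
    (hS : IsSecureVC (SimpleGraph.pathGraph n) ↑S) :
    pathWeight (SpathFinset n) ≤ pathWeight S ∧
      (pathWeight S = pathWeight (SpathFinset n) ↔ S = SpathFinset n) :=
  dominance S (SpathFinset n) (fun k hag hk => key S hS k hag hk)
end
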